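/- Backward induction for value functions with history state (discrete, finite horizon): define, for t = 0,...,T-1 and h_t ∈ H_t, V_t(h_t) = inf over history feedbacks γ_{t:T-1} of E[j(flow from h_t under γ and the noise)] where the noise w_{t+1},...,w_T is drawn successively from the kernels ρ_{s,s+1} evaluated at the running history, and V_T = j for a nonnegative criterion j : H_T → [0,∞]. Then V_t(h_t) = inf_{u_t ∈ U_t} Σ_{w_{t+1} ∈ W_{t+1}} V_{t+1}(h_t, u_t, w_{t+1}) ρ_{t,t+1}(h_t, {w_{t+1}}) for all t = 0,...,T-1 and h_t ∈ H_t. -/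

import Mathlib

open scoped ENNReal

/-- History space `H_t = W_0 × ∏_{s=0}^{t-1}(U_s × W_{s+1})`. -/
def Hist (W U : ℕ → Type) : ℕ → Type :=
  fun t => Nat.rec (motive := fun _ => Type) (W 0) (fun s ih => ih × U s × W (s + 1)) t

/-- Transport of a history along an equality of time indices. -/
def hcast {W U : ℕ → Type} {a b : ℕ} (e : a = b) (h : Hist W U a) : Hist W U b := e ▸ h

/-- Noise sequences `w_{t+1:t+n}`. -/
def NoiseSeqE (W : ℕ → Type) (t : ℕ) : ℕ → Type :=
  fun n => Nat.rec (motive := fun _ => Type) PUnit (fun m ih => ih × W (t + m + 1)) n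

/-- The flow `Φ_{t,t+n}^γ` generated by a family of history feedbacks `γ`. -/
def flowE {W U : ℕ → Type} (γ : ∀ s, Hist W U s → U s) :
    ∀ (n t : ℕ), Hist W U t → NoiseSeqE W t n → Hist W U (t + n)
  | 0, _, h, _ => h
  | n + 1, t, h, ws =>
      (flowE γ n t h ws.1, γ (t + n) (flowE γ n t h ws.1), ws.2)

/-- The product `∏_{s=t+1}^{t+n} ρ_{s-1,s}(Φ_{t,s-1}^γ(h_t, w_{t+1:s-1}), {w_s})` of the
one-step kernels evaluated along the flow. -/
noncomputable def probE {W U : ℕ → Type} (ρ : ∀ s, Hist W U s → W (s + 1) → ℝ≥0∞)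
    (γ : ∀ s, Hist W U s → U s) :
    ∀ (n t : ℕ), Hist W U t → NoiseSeqE W t n → ℝ≥0∞
  | 0, _, _, _ => 1
  | n + 1, t, h, ws => probE ρ γ n t h ws.1 * ρ (t + n) (flowE γ n t h ws.1) ws.2

/-- The value function at time `t` (with `n = T - t` remaining steps): the infimum over
history feedbacks of the expected criterion
`Σ_{w_{t+1:T}} j(Φ_{t,T}^γ(h_t, w_{t+1:T})) ∏_{s=t+1}^{T} ρ_{s-1,s}(⋯, {w_s})`. -/
noncomputable def Val {W U : ℕ → Type} (ρ : ∀ s, Hist W U s → W (s + 1) → ℝ≥0∞)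
    (T : ℕ) (j : Hist W U T → ℝ≥0∞) (n t : ℕ) (e : t + n = T) (h : Hist W U t) : ℝ≥0∞ :=
  ⨅ γ : ∀ s, Hist W U s → U s, ∑' ws : NoiseSeqE W t n,
    j (hcast e (flowE γ n t h ws)) * probE ρ γ n t h ws

namespace BellmanAux

variable {W U : ℕ → Type}

/-- cast for W -/
def Wcast {W : ℕ → Type} {a b : ℕ} (e : a = b) (w : W a) : W b := cast (congrArg W e) w

/-- projection of histories -/
def proj : ∀ (m s : ℕ), Hist W U (s + m) → Hist W U s
  | 0, _, h => h
  | m + 1, s, h => proj m s h.1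

theorem proj_flowE (γ : ∀ s, Hist W U s → U s) :
    ∀ (m s : ℕ) (h : Hist W U s) (ws : NoiseSeqE W s m),
      proj m s (flowE γ m s h ws) = h
  | 0, _, _, _ => rfl
  | m + 1, s, h, ws => proj_flowE γ m s h ws.1

def consEquiv (W : ℕ → Type) (t : ℕ) :
    ∀ n, (W (t + 1) × NoiseSeqE W (t + 1) n) ≃ NoiseSeqE W t (n + 1)
  | 0 => Equiv.prodComm _ _
  | n + 1 =>
      (Equiv.prodAssoc _ _ _).symm.trans
        (Equiv.prodCongr (consEquiv W t n) (Equiv.cast (congrArg W (by omega))))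

theorem hcast_snoc {a b : ℕ} (E : a = b) (γ : ∀ s, Hist W U s → U s)
    (x : Hist W U a) (w' : W (a + 1)) :
    ((hcast E x, γ b (hcast E x), Wcast (by omega : a + 1 = b + 1) w') : Hist W U (b + 1))
      = hcast (by omega : a + 1 = b + 1) ((x, γ a x, w') : Hist W U (a + 1)) := by
  subst E; rfl

theorem consEquiv_succ {t n : ℕ} (w : W (t + 1)) (ws : NoiseSeqE W (t + 1) (n + 1)) :
    consEquiv W t (n + 1) (w, ws)
      = ((consEquiv W t n (w, ws.1),
          Wcast (by omega : (t + 1) + n + 1 = t + (n + 1) + 1) ws.2) :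
          NoiseSeqE W t (n + 1 + 1)) := rfl

theorem flowE_cons (γ : ∀ s, Hist W U s → U s) :
    ∀ (n t : ℕ) (h : Hist W U t) (w : W (t + 1)) (ws : NoiseSeqE W (t + 1) n),
      flowE γ (n + 1) t h (consEquiv W t n (w, ws))
        = hcast (by omega : (t + 1) + n = t + (n + 1)) (flowE γ n (t + 1) (h, γ t h, w) ws)
  | 0, t, h, w, ws => rfl
  | n + 1, t, h, w, ws => by
      have IH := flowE_cons γ n t h w ws.1
      rw [consEquiv_succ]
      show (flowE γ (n + 1) t h (consEquiv W t n (w, ws.1)),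
            γ (t + (n + 1)) (flowE γ (n + 1) t h (consEquiv W t n (w, ws.1))),
            Wcast (by omega : (t + 1) + n + 1 = t + (n + 1) + 1) ws.2) = _
      rw [IH]
      exact hcast_snoc (by omega) γ (flowE γ n (t + 1) (h, γ t h, w) ws.1) ws.2

theorem rho_cast (ρ : ∀ s, Hist W U s → W (s + 1) → ℝ≥0∞) {a b : ℕ} (E : a = b)
    (x : Hist W U a) (w' : W (a + 1)) :
    ρ b (hcast E x) (Wcast (by omega : a + 1 = b + 1) w') = ρ a x w' := by
  subst E; rfl

theorem probE_cons (ρ : ∀ s, Hist W U s → W (s + 1) → ℝ≥0∞) (γ : ∀ s, Hist W U s → U s) :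
    ∀ (n t : ℕ) (h : Hist W U t) (w : W (t + 1)) (ws : NoiseSeqE W (t + 1) n),
      probE ρ γ (n + 1) t h (consEquiv W t n (w, ws))
        = ρ t h w * probE ρ γ n (t + 1) (h, γ t h, w) ws
  | 0, t, h, w, ws => by
      show (1 : ℝ≥0∞) * ρ t h w = ρ t h w * 1
      rw [one_mul, mul_one]
  | n + 1, t, h, w, ws => by
      have IH := probE_cons ρ γ n t h w ws.1
      rw [consEquiv_succ]
      show probE ρ γ (n + 1) t h (consEquiv W t n (w, ws.1)) *
            ρ (t + (n + 1)) (flowE γ (n + 1) t h (consEquiv W t n (w, ws.1)))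
              (Wcast (by omega : (t + 1) + n + 1 = t + (n + 1) + 1) ws.2) = _
      rw [IH, flowE_cons γ n t h w ws.1,
        rho_cast ρ (by omega : (t + 1) + n = t + (n + 1)) (flowE γ n (t + 1) (h, γ t h, w) ws.1)
          ws.2]
      show _ = ρ t h w * (probE ρ γ n (t + 1) (h, γ t h, w) ws.1 *
        ρ ((t + 1) + n) (flowE γ n (t + 1) (h, γ t h, w) ws.1) ws.2)
      ring

theorem hcast_hcast {a b c : ℕ} (e1 : a = b) (e2 : b = c) (x : Hist W U a) :
    hcast e2 (hcast e1 x) = hcast (e1.trans e2) x := by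
  subst e1; rfl

theorem flowE_congr {γ γ' : ∀ s, Hist W U s → U s} (s : ℕ) (h : Hist W U s)
    (H : ∀ (m : ℕ) (h'' : Hist W U (s + m)), proj m s h'' = h →
      γ (s + m) h'' = γ' (s + m) h'') :
    ∀ (m : ℕ) (ws : NoiseSeqE W s m), flowE γ m s h ws = flowE γ' m s h ws
  | 0, _ => rfl
  | m + 1, ws => by
      have IH := flowE_congr s h H m ws.1
      show (flowE γ m s h ws.1, γ (s + m) (flowE γ m s h ws.1), ws.2)
        = (flowE γ' m s h ws.1, γ' (s + m) (flowE γ' m s h ws.1), ws.2)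
      rw [IH, H m (flowE γ' m s h ws.1) (proj_flowE γ' m s h ws.1)]

theorem probE_congr (ρ : ∀ s, Hist W U s → W (s + 1) → ℝ≥0∞)
    {γ γ' : ∀ s, Hist W U s → U s} (s : ℕ) (h : Hist W U s)
    (H : ∀ (m : ℕ) (h'' : Hist W U (s + m)), proj m s h'' = h →
      γ (s + m) h'' = γ' (s + m) h'') :
    ∀ (m : ℕ) (ws : NoiseSeqE W s m), probE ρ γ m s h ws = probE ρ γ' m s h ws
  | 0, _ => rfl
  | m + 1, ws => by
      have IH := probE_congr ρ s h H m ws.1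
      show probE ρ γ m s h ws.1 * ρ (s + m) (flowE γ m s h ws.1) ws.2
        = probE ρ γ' m s h ws.1 * ρ (s + m) (flowE γ' m s h ws.1) ws.2
      rw [IH, flowE_congr s h H m ws.1]

theorem proj_hcast {s a b : ℕ} (em : a = b) (pf : s + a = s + b) (h'' : Hist W U (s + a)) :
    proj b s (hcast pf h'') = proj a s h'' := by
  subst em; rfl

theorem finsetSum_iInf {ι Γ : Type} [Nonempty Γ] (s : Finset ι) (g : ι → Γ → ℝ≥0∞) :
    ∑ i ∈ s, ⨅ γ : Γ, g i γ = ⨅ f : ι → Γ, ∑ i ∈ s, g i (f i) := by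
  classical
  induction s using Finset.induction with
  | empty => simp
  | @insert a s ha ih =>
      rw [Finset.sum_insert ha, ih]
      refine le_antisymm (le_iInf fun f' => ?_) ?_
      · rw [Finset.sum_insert ha]
        exact add_le_add (iInf_le _ (f' a)) (iInf_le _ f')
      · rw [ENNReal.iInf_add]
        refine le_iInf fun γ => ?_
        rw [ENNReal.add_iInf]
        refine le_iInf fun f => iInf_le_of_le (Function.update f a γ) ?_
        rw [Finset.sum_insert ha, Function.update_self]
        refine add_le_add le_rfl (le_of_eq (Finset.sum_congr rfl fun i hi => ?_))
        rw [Function.update_of_ne (by rintro rfl; exact ha hi : i ≠ a)]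

end BellmanAux

namespace BellmanAux

noncomputable def gstar {W U : ℕ → Type} [∀ s, Nonempty (U s)] (t : ℕ) (u : U t)
    (f : W (t + 1) → ∀ s, Hist W U s → U s) : ∀ s, Hist W U s → U s :=
  fun s h'' =>
    if hs : t + 1 ≤ s then
      f ((proj (s - (t + 1)) (t + 1) (hcast (by omega) h'')).2.2) s h''
    else if hst : s = t then cast (congrArg U hst.symm) u
    else Classical.arbitrary (U s)

theorem gstar_t {W U : ℕ → Type} [∀ s, Nonempty (U s)] (t : ℕ) (u : U t)
    (f : W (t + 1) → ∀ s, Hist W U s → U s) (h : Hist W U t) :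
    gstar t u f t h = u := by
  unfold gstar
  rw [dif_neg (by omega), dif_pos rfl]
  rfl

theorem gstar_apply {W U : ℕ → Type} [∀ s, Nonempty (U s)] (t : ℕ) (u : U t)
    (f : W (t + 1) → ∀ s, Hist W U s → U s) (m : ℕ) (h'' : Hist W U ((t + 1) + m)) :
    gstar t u f ((t + 1) + m) h'' = f ((proj m (t + 1) h'').2.2) ((t + 1) + m) h'' := by
  unfold gstar
  rw [dif_pos (Nat.le_add_right (t + 1) m),
    proj_hcast (show m = (t + 1) + m - (t + 1) by omega)]

end BellmanAux


open BellmanAux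

/-- backward induction for value functions with history state (discrete, finite
horizon): `V_t(h_t) = inf_{u_t ∈ U_t} Σ_{w_{t+1} ∈ W_{t+1}} V_{t+1}(h_t,u_t,w_{t+1})
ρ_{t,t+1}(h_t,{w_{t+1}})` for all `t = 0,…,T-1` and `h_t ∈ H_t`. -/
theorem bellman_recursion {W U : ℕ → Type}
    [∀ s, Fintype (W s)] [∀ s, Nonempty (W s)] [∀ s, Fintype (U s)] [∀ s, Nonempty (U s)]
    (T : ℕ) (ρ : ∀ s, Hist W U s → W (s + 1) → ℝ≥0∞)
    (hpmf : ∀ s (h : Hist W U s), ∑' w : W (s + 1), ρ s h w = 1)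
    (j : Hist W U T → ℝ≥0∞)
    (n t : ℕ) (e : t + (n + 1) = T) (h : Hist W U t) :
    Val ρ T j (n + 1) t e h
      = ⨅ u : U t, ∑' w : W (t + 1),
          Val ρ T j n (t + 1) (by omega) (h, u, w) * ρ t h w := by
  classical
  haveI : Nonempty (∀ s, Hist W U s → U s) := ⟨fun s _ => Classical.arbitrary (U s)⟩
  have e' : (t + 1) + n = T := by omega
  have hρ_ne : ∀ w : W (t + 1), ρ t h w ≠ ∞ := by
    intro w
    refine ne_top_of_le_ne_top ENNReal.one_ne_top ?_
    rw [← hpmf t h]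
    exact ENNReal.le_tsum w
  set Cost : (∀ s, Hist W U s → U s) → Hist W U (t + 1) → ℝ≥0∞ := fun γ h' =>
    ∑' ws : NoiseSeqE W (t + 1) n,
      j (hcast e' (flowE γ n (t + 1) h' ws)) * probE ρ γ n (t + 1) h' ws with hCost
  have hVal : ∀ (pf : (t + 1) + n = T) (h' : Hist W U (t + 1)),
      Val ρ T j n (t + 1) pf h' = ⨅ γ, Cost γ h' := fun pf h' => rfl
  -- Step A : peel the first noise off the cost-to-go
  have stepA : ∀ γ : ∀ s, Hist W U s → U s,
      (∑' ws : NoiseSeqE W t (n + 1),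
          j (hcast e (flowE γ (n + 1) t h ws)) * probE ρ γ (n + 1) t h ws)
        = ∑' w : W (t + 1), Cost γ (h, γ t h, w) * ρ t h w := by
    intro γ
    rw [← (consEquiv W t n).tsum_eq
      (fun ws => j (hcast e (flowE γ (n + 1) t h ws)) * probE ρ γ (n + 1) t h ws),
      ENNReal.tsum_prod']
    refine tsum_congr fun w => ?_
    calc ∑' ws : NoiseSeqE W (t + 1) n,
          j (hcast e (flowE γ (n + 1) t h (consEquiv W t n (w, ws))))
            * probE ρ γ (n + 1) t h (consEquiv W t n (w, ws))
        = ∑' ws : NoiseSeqE W (t + 1) n,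
            (j (hcast e' (flowE γ n (t + 1) (h, γ t h, w) ws))
              * probE ρ γ n (t + 1) (h, γ t h, w) ws) * ρ t h w := by
          refine tsum_congr fun ws => ?_
          rw [flowE_cons, probE_cons, hcast_hcast]
          rw [mul_comm (ρ t h w) (probE ρ γ n (t + 1) (h, γ t h, w) ws), ← mul_assoc]
      _ = Cost γ (h, γ t h, w) * ρ t h w := ENNReal.tsum_mul_right
  have key : Val ρ T j (n + 1) t e h
      = ⨅ γ : ∀ s, Hist W U s → U s, ∑' w : W (t + 1), Cost γ (h, γ t h, w) * ρ t h w :=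
    iInf_congr stepA
  -- combined feedback realizes any selection f
  have hcomb : ∀ (u : U t) (f : W (t + 1) → ∀ s, Hist W U s → U s) (w : W (t + 1)),
      Cost (gstar t u f) (h, u, w) = Cost (f w) (h, u, w) := by
    intro u f w
    have H : ∀ (m : ℕ) (h'' : Hist W U ((t + 1) + m)),
        proj m (t + 1) h'' = ((h, u, w) : Hist W U (t + 1)) →
        gstar t u f ((t + 1) + m) h'' = f w ((t + 1) + m) h'' := by
      intro m h'' hproj
      rw [gstar_apply, hproj]
    refine tsum_congr fun ws => ?_
    rw [flowE_congr (t + 1) (h, u, w) H n ws, probE_congr ρ (t + 1) (h, u, w) H n ws]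
  -- rewrite the right-hand side
  show _ = ⨅ u : U t, ∑' w : W (t + 1), (⨅ γ, Cost γ (h, u, w)) * ρ t h w
  rw [key]
  refine le_antisymm ?_ ?_
  · refine le_iInf fun u => ?_
    have hBu : (∑' w : W (t + 1), (⨅ γ, Cost γ (h, u, w)) * ρ t h w)
        = ⨅ f : W (t + 1) → ∀ s, Hist W U s → U s,
            ∑ w : W (t + 1), Cost (f w) (h, u, w) * ρ t h w := by
      have h1 : ∀ w : W (t + 1),
          (⨅ γ, Cost γ (h, u, w)) * ρ t h w = ⨅ γ, Cost γ (h, u, w) * ρ t h w := fun w =>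
        ENNReal.iInf_mul (fun hinf => absurd hinf (hρ_ne w))
      rw [tsum_congr h1, tsum_fintype]
      exact finsetSum_iInf Finset.univ (fun w γ => Cost γ (h, u, w) * ρ t h w)
    rw [hBu]
    refine le_iInf fun f => ?_
    refine iInf_le_of_le (gstar t u f) (le_of_eq ?_)
    calc (∑' w : W (t + 1), Cost (gstar t u f) (h, gstar t u f t h, w) * ρ t h w)
        = ∑' w : W (t + 1), Cost (f w) (h, u, w) * ρ t h w := by
          refine tsum_congr fun w => ?_
          rw [gstar_t, hcomb]
      _ = ∑ w : W (t + 1), Cost (f w) (h, u, w) * ρ t h w := tsum_fintype _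
  · refine le_iInf fun γ => ?_
    refine iInf_le_of_le (γ t h) ?_
    refine ENNReal.tsum_le_tsum fun w => ?_
    exact mul_le_mul_left (iInf_le _ γ) _
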